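/- Specific information is additive under independence: if (S1,Y1) is independent of (S2,Y2), then for all outcomes s1, s2 with positive probability, I(S1S2 = (s1,s2); Y1Y2) = I(S1 = s1; Y1) + I(S2 = s2; Y2), where I(S = s; Y) := Σ_y P(y|s) log(P(s|y)/P(s)). -/

import Mathlib

open scoped BigOperators

/-- A probability distribution on a finite type. -/
def IsProbDist {A : Type} [Fintype A] (p : A → ℝ) : Prop :=
  (∀ x, 0 ≤ p x) ∧ ∑ x, p x = 1

/-- Shannon mutual information `I(A;B)` of a joint distribution on `A × B`. -/
noncomputable def mi2 {A B : Type} [Fintype A] [Fintype B] (p : A × B → ℝ) : ℝ :=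
  ∑ a, ∑ b, p (a, b) * Real.log (p (a, b) / ((∑ b', p (a, b')) * (∑ a', p (a', b))))

/-- Conditional mutual information `I(A;B|C)` of a joint distribution on `A × B × C`. -/
noncomputable def cmi3 {A B C : Type} [Fintype A] [Fintype B] [Fintype C]
    (p : A × B × C → ℝ) : ℝ :=
  ∑ a, ∑ b, ∑ c, p (a, b, c) *
    Real.log ((p (a, b, c) * (∑ a', ∑ b', p (a', b', c))) /
      ((∑ b', p (a, b', c)) * (∑ a', p (a', b, c))))

/-- Marginal distribution of `(S,Y)`. -/
noncomputable def margSY {S Y Z : Type} [Fintype S] [Fintype Y] [Fintype Z]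
    (p : S × Y × Z → ℝ) : S × Y → ℝ := fun x => ∑ z, p (x.1, x.2, z)

/-- Marginal distribution of `(S,Z)`. -/
noncomputable def margSZ {S Y Z : Type} [Fintype S] [Fintype Y] [Fintype Z]
    (p : S × Y × Z → ℝ) : S × Z → ℝ := fun x => ∑ y, p (x.1, y, x.2)

/-- `I(S;Y)`. -/
noncomputable def ISY {S Y Z : Type} [Fintype S] [Fintype Y] [Fintype Z]
    (p : S × Y × Z → ℝ) : ℝ := mi2 (margSY p)

/-- `I(S;Z)`. -/
noncomputable def ISZ {S Y Z : Type} [Fintype S] [Fintype Y] [Fintype Z]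
    (p : S × Y × Z → ℝ) : ℝ := mi2 (margSZ p)

/-- `I(S;YZ)`, the mutual information of `S` with the pair `(Y,Z)`. -/
noncomputable def ISYZ {S Y Z : Type} [Fintype S] [Fintype Y] [Fintype Z]
    (p : S × Y × Z → ℝ) : ℝ := mi2 p

/-- `I(S;Y|Z)`. -/
noncomputable def ISYgZ {S Y Z : Type} [Fintype S] [Fintype Y] [Fintype Z]
    (p : S × Y × Z → ℝ) : ℝ := cmi3 p

/-- The same joint distribution, with the roles of `Y` and `Z` exchanged. -/
def swapYZ {S Y Z : Type} (p : S × Y × Z → ℝ) : S × Z × Y → ℝ :=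
  fun x => p (x.1, x.2.2, x.2.1)

/-- `I(S;Z|Y)`. -/
noncomputable def ISZgY {S Y Z : Type} [Fintype S] [Fintype Y] [Fintype Z]
    (p : S × Y × Z → ℝ) : ℝ := ISYgZ (swapYZ p)

/-- The joint distribution of two independent triples, grouped componentwise. -/
def prodDist {S1 Y1 Z1 S2 Y2 Z2 : Type}
    (p1 : S1 × Y1 × Z1 → ℝ) (p2 : S2 × Y2 × Z2 → ℝ) :
    (S1 × S2) × (Y1 × Y2) × (Z1 × Z2) → ℝ :=
  fun x => p1 (x.1.1, x.2.1.1, x.2.2.1) * p2 (x.1.2, x.2.1.2, x.2.2.2)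

/-- The joint distribution of two independent pairs, grouped componentwise. -/
def prodDist2 {S1 Y1 S2 Y2 : Type}
    (p1 : S1 × Y1 → ℝ) (p2 : S2 × Y2 → ℝ) : (S1 × S2) × (Y1 × Y2) → ℝ :=
  fun x => p1 (x.1.1, x.2.1) * p2 (x.1.2, x.2.2)

/-- The specific information `I(S = s; Y) = ∑_y P(y|s) log (P(s|y)/P(s))`. -/
noncomputable def specInfo {S Y : Type} [Fintype S] [Fintype Y]
    (p : S × Y → ℝ) (s : S) : ℝ :=
  ∑ y, (p (s, y) / (∑ y', p (s, y'))) *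
    Real.log ((p (s, y) / (∑ s', p (s', y))) / (∑ y', p (s, y')))

/-- Specific information is additive under independence: for outcomes of positive
probability, `I(S1S2 = (s1,s2); Y1Y2) = I(S1 = s1; Y1) + I(S2 = s2; Y2)`. -/
theorem specInfo_additive {S1 Y1 S2 Y2 : Type}
    [Fintype S1] [Fintype Y1] [Fintype S2] [Fintype Y2]
    (p1 : S1 × Y1 → ℝ) (p2 : S2 × Y2 → ℝ)
    (hp1 : IsProbDist p1) (hp2 : IsProbDist p2)
    (s1 : S1) (s2 : S2)
    (hs1 : 0 < ∑ y, p1 (s1, y)) (hs2 : 0 < ∑ y, p2 (s2, y)) :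
    specInfo (prodDist2 p1 p2) (s1, s2) = specInfo p1 s1 + specInfo p2 s2 := by
  classical
  obtain ⟨h1pos, h1sum⟩ := hp1
  obtain ⟨h2pos, h2sum⟩ := hp2
  set A := ∑ y, p1 (s1, y) with hAdef
  set B := ∑ y, p2 (s2, y) with hBdef
  have hrow : (∑ y' : Y1 × Y2, prodDist2 p1 p2 ((s1, s2), y')) = A * B := by
    rw [Fintype.sum_prod_type]
    simp only [prodDist2]
    rw [← Finset.sum_mul_sum]
  have hcol : ∀ (y1 : Y1) (y2 : Y2),
      (∑ s' : S1 × S2, prodDist2 p1 p2 (s', (y1, y2)))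
        = (∑ s', p1 (s', y1)) * (∑ s', p2 (s', y2)) := by
    intro y1 y2
    rw [Fintype.sum_prod_type]
    simp only [prodDist2]
    rw [← Finset.sum_mul_sum]
  have key : ∀ (y1 : Y1) (y2 : Y2),
      (prodDist2 p1 p2 ((s1, s2), (y1, y2)) / (A * B)) *
        Real.log ((prodDist2 p1 p2 ((s1, s2), (y1, y2)) /
          ((∑ s', p1 (s', y1)) * (∑ s', p2 (s', y2)))) / (A * B))
      = (p2 (s2, y2) / B) *
          ((p1 (s1, y1) / A) * Real.log ((p1 (s1, y1) / ∑ s', p1 (s', y1)) / A))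
        + (p1 (s1, y1) / A) *
          ((p2 (s2, y2) / B) * Real.log ((p2 (s2, y2) / ∑ s', p2 (s', y2)) / B)) := by
    intro y1 y2
    by_cases ha : p1 (s1, y1) = 0
    · simp [prodDist2, ha]
    by_cases hb : p2 (s2, y2) = 0
    · simp [prodDist2, hb]
    have ha' : 0 < p1 (s1, y1) := lt_of_le_of_ne (h1pos _) (Ne.symm ha)
    have hb' : 0 < p2 (s2, y2) := lt_of_le_of_ne (h2pos _) (Ne.symm hb)
    have hP1 : 0 < ∑ s', p1 (s', y1) :=
      lt_of_lt_of_le ha' (Finset.single_le_sum (fun i _ => h1pos (i, y1)) (Finset.mem_univ s1))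
    have hP2 : 0 < ∑ s', p2 (s', y2) :=
      lt_of_lt_of_le hb' (Finset.single_le_sum (fun i _ => h2pos (i, y2)) (Finset.mem_univ s2))
    have hx1 : 0 < (p1 (s1, y1) / ∑ s', p1 (s', y1)) / A := by positivity
    have hx2 : 0 < (p2 (s2, y2) / ∑ s', p2 (s', y2)) / B := by positivity
    have harg : (prodDist2 p1 p2 ((s1, s2), (y1, y2)) /
          ((∑ s', p1 (s', y1)) * (∑ s', p2 (s', y2)))) / (A * B)
        = ((p1 (s1, y1) / ∑ s', p1 (s', y1)) / A) *
          ((p2 (s2, y2) / ∑ s', p2 (s', y2)) / B) := by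
      simp only [prodDist2]
      field_simp
    rw [harg, Real.log_mul (ne_of_gt hx1) (ne_of_gt hx2)]
    simp only [prodDist2]
    field_simp
  have lhs : specInfo (prodDist2 p1 p2) (s1, s2)
      = ∑ y1, ∑ y2,
          ((p2 (s2, y2) / B) *
            ((p1 (s1, y1) / A) * Real.log ((p1 (s1, y1) / ∑ s', p1 (s', y1)) / A))
          + (p1 (s1, y1) / A) *
            ((p2 (s2, y2) / B) * Real.log ((p2 (s2, y2) / ∑ s', p2 (s', y2)) / B))) := by
    unfold specInfo
    rw [Fintype.sum_prod_type]
    refine Finset.sum_congr rfl fun y1 _ => Finset.sum_congr rfl fun y2 _ => ?_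
    rw [hrow, hcol y1 y2, key y1 y2]
  have hsum1 : (∑ y1, p1 (s1, y1) / A) = 1 := by
    rw [← Finset.sum_div]
    exact div_self (ne_of_gt hs1)
  have hsum2 : (∑ y2, p2 (s2, y2) / B) = 1 := by
    rw [← Finset.sum_div]
    exact div_self (ne_of_gt hs2)
  rw [lhs]
  have : ∀ y1 : Y1, (∑ y2,
          ((p2 (s2, y2) / B) *
            ((p1 (s1, y1) / A) * Real.log ((p1 (s1, y1) / ∑ s', p1 (s', y1)) / A))
          + (p1 (s1, y1) / A) *
            ((p2 (s2, y2) / B) * Real.log ((p2 (s2, y2) / ∑ s', p2 (s', y2)) / B))))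
      = ((p1 (s1, y1) / A) * Real.log ((p1 (s1, y1) / ∑ s', p1 (s', y1)) / A))
        + (p1 (s1, y1) / A) * (∑ y2,
            ((p2 (s2, y2) / B) * Real.log ((p2 (s2, y2) / ∑ s', p2 (s', y2)) / B))) := by
    intro y1
    rw [Finset.sum_add_distrib, ← Finset.sum_mul, hsum2, one_mul, ← Finset.mul_sum]
  simp only [this]
  rw [Finset.sum_add_distrib, ← Finset.sum_mul, hsum1, one_mul]
  rfl
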